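/- With Aₙ as in the previous definition and α ≠ 1/2, the matrix Aₙ is invertible with inverse Aₙ⁻¹(i,j) = (-1)^{i+j}/(1-2α)^n · Aₙ(i,j). -/

import Mathlib

open Polynomial Finset

noncomputable def Amat (n : ℕ) (α : ℝ) : Matrix (Fin (n+1)) (Fin (n+1)) ℝ :=
  Matrix.of fun i j : Fin (n+1) =>
    ∑ s ∈ Finset.Icc ((i : ℕ) - (j : ℕ)) (min (n - (j : ℕ)) (i : ℕ)),
      ((i : ℕ).choose s : ℝ) * ((n - (i : ℕ)).choose ((j : ℕ) + s - (i : ℕ)) : ℝ) *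
        α ^ ((j : ℕ) + 2 * s - (i : ℕ)) * (1 - α) ^ (n - ((j : ℕ) + 2 * s - (i : ℕ)))


lemma coeff_lin_pow {R : Type*} [CommRing R] (a b : R) (i s : ℕ) :
    ((C a + C b * X : R[X])^i).coeff s = (i.choose s : R) * a^(i-s) * b^s := by
  induction i generalizing s with
  | zero =>
    cases s <;> simp [coeff_one]
  | succ i ih =>
    rw [pow_succ, mul_add, coeff_add, coeff_mul_C, ← mul_assoc]
    cases s with
    | zero => simp [ih, coeff_mul_X_zero, ← pow_succ]
    | succ s =>
      rw [coeff_mul_X, coeff_mul_C, ih, ih, Nat.choose_succ_succ']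
      push_cast
      rcases le_or_gt (s+1) i with h | h
      · rw [show i - s = i - (s+1) + 1 by omega]
        ring
      · rcases Nat.lt_or_ge i s with h2 | h2
        · simp [Nat.choose_eq_zero_of_lt, h, h2]
        · have : i = s := by omega
          subst this
          simp [Nat.choose_eq_zero_of_lt, h]
          ring

lemma Amat_sum_eq (n : ℕ) (α : ℝ) (i j : ℕ) (hi : i ≤ n) (hj : j ≤ n) :
    ∑ s ∈ Finset.Icc (i - j) (min (n - j) i),
      ((i.choose s : ℝ) * ((n - i).choose (j + s - i) : ℝ) *
        α ^ (j + 2 * s - i) * (1 - α) ^ (n - (j + 2 * s - i)))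
    = ∑ t ∈ Finset.range (j+1),
      ((i.choose t : ℝ) * α^(i-t) * (1-α)^t) *
        (((n-i).choose (j-t) : ℝ) * (1-α)^((n-i)-(j-t)) * α^(j-t)) := by
  have h1 : ∑ s ∈ Finset.Icc (i - j) (min (n - j) i),
      ((i.choose s : ℝ) * ((n - i).choose (j + s - i) : ℝ) *
        α ^ (j + 2 * s - i) * (1 - α) ^ (n - (j + 2 * s - i)))
      = ∑ s ∈ Finset.Icc (i - j) i,
      ((i.choose s : ℝ) * ((n - i).choose (j + s - i) : ℝ) *
        α ^ (j + 2 * s - i) * (1 - α) ^ (n - (j + 2 * s - i))) := by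
    apply Finset.sum_subset
    · intro s hs
      simp only [Finset.mem_Icc] at *
      omega
    · intro s hs hns
      simp only [Finset.mem_Icc] at *
      have : n - i < j + s - i := by omega
      rw [Nat.choose_eq_zero_of_lt this]
      simp
  have h2 : ∑ t ∈ Finset.range (j+1),
      ((i.choose t : ℝ) * α^(i-t) * (1-α)^t) *
        (((n-i).choose (j-t) : ℝ) * (1-α)^((n-i)-(j-t)) * α^(j-t))
      = ∑ t ∈ Finset.range (min i j + 1),
      ((i.choose t : ℝ) * α^(i-t) * (1-α)^t) *
        (((n-i).choose (j-t) : ℝ) * (1-α)^((n-i)-(j-t)) * α^(j-t)) := by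
    symm
    apply Finset.sum_subset
    · exact Finset.range_subset_range.2 (by omega)
    · intro t ht hnt
      simp only [Finset.mem_range] at *
      have : i < t := by omega
      rw [Nat.choose_eq_zero_of_lt this]
      simp
  rw [h1, h2]
  apply Finset.sum_nbij' (fun s => i - s) (fun t => i - t)
  · intro s hs; simp only [Finset.mem_Icc, Finset.mem_range] at *; omega
  · intro t ht; simp only [Finset.mem_Icc, Finset.mem_range] at *; omega
  · intro s hs; simp only [Finset.mem_Icc] at hs; omega
  · intro t ht; simp only [Finset.mem_range] at ht; omega
  · intro s hs
    simp only [Finset.mem_Icc] at hs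
    rcases le_or_gt (j + s) n with h | h
    · have e1 : i - (i - s) = s := by omega
      have e2 : j - (i - s) = j + s - i := by omega
      have e3 : (i - s) + (n - i - (j + s - i)) = n - (j + 2*s - i) := by omega
      have e4 : s + (j + s - i) = j + 2*s - i := by omega
      rw [Nat.choose_symm hs.2, e1, e2, ← e3, ← e4, pow_add, pow_add]
      ring
    · have h3 : n - i < j + s - i := by omega
      have h4 : (n - i) < j - (i - s) := by omega
      rw [Nat.choose_eq_zero_of_lt h3, Nat.choose_eq_zero_of_lt h4]
      simp

noncomputable def Pmat (n : ℕ) (α : ℝ) (i : ℕ) : ℝ[X] :=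
  (C α + C (1-α) * X)^i * (C (1-α) + C α * X)^(n-i)

lemma natDegree_lin_le (a b : ℝ) : (C a + C b * X : ℝ[X]).natDegree ≤ 1 :=
  (natDegree_add_le _ _).trans
    (max_le (by simp) ((natDegree_C_mul_le _ _).trans natDegree_X_le))

lemma Pmat_natDegree_lt (n : ℕ) (α : ℝ) (i : ℕ) (hi : i ≤ n) :
    (Pmat n α i).natDegree < n + 1 := by
  have h1 := natDegree_pow_le (p := (C α + C (1-α) * X : ℝ[X])) (n := i)
  have h2 := natDegree_pow_le (p := (C (1-α) + C α * X : ℝ[X])) (n := n - i)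
  have h3 := natDegree_lin_le α (1-α)
  have h4 := natDegree_lin_le (1-α) α
  have := natDegree_mul_le (p := ((C α + C (1-α) * X : ℝ[X]))^i)
    (q := ((C (1-α) + C α * X : ℝ[X]))^(n-i))
  rw [Pmat]
  have hb1 : i * (C α + C (1-α) * X : ℝ[X]).natDegree ≤ i * 1 := Nat.mul_le_mul_left _ h3
  have hb2 : (n-i) * (C (1-α) + C α * X : ℝ[X]).natDegree ≤ (n-i) * 1 :=
    Nat.mul_le_mul_left _ h4
  omega

lemma key (n : ℕ) (α β : ℝ) (i : ℕ) (hi : i ≤ n) :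
    ∑ j ∈ range (n+1), C ((Pmat n α i).coeff j) *
        ((C β + C (1-β) * X)^j * (C (1-β) + C β * X)^(n-j))
      = Pmat n (α+β-2*α*β) i := by
  set K := FractionRing (Polynomial ℝ)
  have hinj : Function.Injective (algebraMap ℝ[X] K) := IsFractionRing.injective _ _
  apply hinj
  set φ := algebraMap ℝ[X] K with hφ
  set u : ℝ[X] := C β + C (1-β) * X with hu
  set v : ℝ[X] := C (1-β) + C β * X with hv
  have hv0 : v ≠ 0 := by
    intro h
    have h1 := congrArg (Polynomial.eval 1) h
    simp [hv] at h1
  have hV : φ v ≠ 0 := fun h => hv0 (hinj (by simpa using h))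
  set U := φ u
  set V := φ v
  set w : K := U / V with hw
  have hwV : w * V = U := div_mul_cancel₀ _ hV
  -- LHS
  rw [map_sum]
  have hterm : ∀ j ∈ range (n+1),
      φ (C ((Pmat n α i).coeff j) * (u^j * v^(n-j)))
        = φ.comp C ((Pmat n α i).coeff j) * w^j * V^n := by
    intro j hj
    have hj' : j ≤ n := by simp at hj; omega
    have hsplit : V^n = V^j * V^(n-j) := by rw [← pow_add]; congr 1; omega
    simp only [map_mul, map_pow]
    rw [hw, div_pow, hsplit]
    rw [RingHom.comp_apply, mul_assoc, ← mul_assoc (U^j / V^j), div_mul_cancel₀ _ (pow_ne_zero _ hV)]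
  rw [Finset.sum_congr rfl hterm, ← Finset.sum_mul]
  rw [← Polynomial.eval₂_eq_sum_range' (φ.comp C) (Pmat_natDegree_lt n α i hi) w]
  rw [Pmat]
  simp only [eval₂_mul, eval₂_pow, eval₂_add, eval₂_C, eval₂_X]
  -- now: (ψα + ψ(1-α)*w)^i * (ψ(1-α) + ψα*w)^(n-i) * V^n = φ (Pmat n γ i)
  have hVn : V^n = V^i * V^(n-i) := by rw [← pow_add]; congr 1; omega
  rw [hVn, show ∀ A B C D : K, A^i * B^(n-i) * (C^i * D^(n-i)) = (A*C)^i * (B*D)^(n-i) from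
    fun A B C D => by rw [mul_pow, mul_pow]; ring]
  have hc1 : ((φ.comp C) α + (φ.comp C) (1-α) * w) * V
      = φ (C (α+β-2*α*β) + C (1-(α+β-2*α*β)) * X) := by
    have hpoly : C α * v + C (1-α) * u = C (α+β-2*α*β) + C (1-(α+β-2*α*β)) * X := by
      simp only [hu, hv, C_sub, C_add, C_mul, C_1, map_ofNat]
      ring
    calc ((φ.comp C) α + (φ.comp C) (1-α) * w) * V
        = φ (C α) * V + φ (C (1-α)) * (w * V) := by simp [RingHom.comp_apply]; ring
      _ = φ (C α * v + C (1-α) * u) := by rw [hwV]; simp only [map_add, map_mul]; rfl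
      _ = _ := by rw [hpoly]
  have hc2 : ((φ.comp C) (1-α) + (φ.comp C) α * w) * V
      = φ (C (1-(α+β-2*α*β)) + C (α+β-2*α*β) * X) := by
    have hpoly : C (1-α) * v + C α * u = C (1-(α+β-2*α*β)) + C (α+β-2*α*β) * X := by
      simp only [hu, hv, C_sub, C_add, C_mul, C_1, map_ofNat]
      ring
    calc ((φ.comp C) (1-α) + (φ.comp C) α * w) * V
        = φ (C (1-α)) * V + φ (C α) * (w * V) := by simp [RingHom.comp_apply]; ring
      _ = φ (C (1-α) * v + C α * u) := by rw [hwV]; simp only [map_add, map_mul]; rfl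
      _ = _ := by rw [hpoly]
  rw [hc1, hc2, Pmat, map_mul, map_pow, map_pow]

lemma Amat_coeff (n : ℕ) (α : ℝ) (i j : Fin (n+1)) :
    Amat n α i j = (Pmat n α (i:ℕ)).coeff (j:ℕ) := by
  rw [Pmat, coeff_mul, Finset.Nat.sum_antidiagonal_eq_sum_range_succ_mk]
  show ∑ s ∈ Finset.Icc ((i:ℕ) - (j:ℕ)) (min (n - (j:ℕ)) (i:ℕ)), _ = _
  rw [Amat_sum_eq n α i j (Fin.is_le i) (Fin.is_le j)]
  exact Finset.sum_congr rfl fun t _ => by rw [coeff_lin_pow, coeff_lin_pow]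

lemma Amat_mul (n : ℕ) (α β : ℝ) :
    Amat n α * Amat n β = Amat n (α+β-2*α*β) := by
  ext i k
  rw [Matrix.mul_apply]
  simp only [Amat_coeff]
  rw [Fin.sum_univ_eq_sum_range (fun j => (Pmat n α (i:ℕ)).coeff j * (Pmat n β j).coeff (k:ℕ))]
  rw [← key n α β i (Fin.is_le i), finset_sum_coeff]
  exact Finset.sum_congr rfl fun j _ => by rw [coeff_C_mul]; rfl

lemma Amat_zero (n : ℕ) : Amat n 0 = 1 := by
  ext i j
  rw [Amat_coeff, Matrix.one_apply, Pmat]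
  simp [coeff_X_pow, Fin.ext_iff, eq_comm]

lemma Amat_inv_entry (n : ℕ) (α : ℝ) (hc : (1:ℝ) - 2*α ≠ 0) :
    Amat n (α/(2*α-1)) = Matrix.of fun i j : Fin (n+1) =>
      (-1 : ℝ) ^ ((i : ℕ) + (j : ℕ)) / (1 - 2*α)^n * Amat n α i j := by
  have hc' : (2*α-1 : ℝ) ≠ 0 := fun h => hc (by linarith)
  set β := α/(2*α-1) with hβ
  have hb : β = -(α/(1-2*α)) := by rw [hβ, ← neg_div_neg_eq, neg_sub, neg_div]
  have h1b : 1 - β = (1-α)/(1-2*α) := by rw [hb, sub_neg_eq_add, eq_div_iff hc, add_mul, div_mul_cancel₀ _ hc]; ring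
  ext i j
  show (Amat n β) i j = _
  rw [Amat, Amat, Matrix.of_apply, Matrix.of_apply, Matrix.of_apply, Finset.mul_sum]
  apply Finset.sum_congr rfl
  intro s hs
  simp only [Finset.mem_Icc] at hs
  have hij : (i:ℕ) ≤ (j:ℕ) + s := by omega
  have hsn : s ≤ n - (j:ℕ) := by omega
  have hjn : (j:ℕ) ≤ n := Fin.is_le j
  have hin : (i:ℕ) ≤ n := Fin.is_le i
  set e := (j:ℕ) + 2*s - (i:ℕ) with he
  have hen : e ≤ n := by omega
  have hpar : ((-1:ℝ))^e = (-1)^((i:ℕ)+(j:ℕ)) := by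
    have hmod : e % 2 = ((i:ℕ)+(j:ℕ)) % 2 := by omega
    rcases Nat.even_or_odd e with he' | he'
    · rw [he'.neg_one_pow,
        (Nat.even_iff.mpr (by rw [← hmod]; exact Nat.even_iff.mp he')).neg_one_pow]
    · rw [he'.neg_one_pow,
        (Nat.odd_iff.mpr (by rw [← hmod]; exact Nat.odd_iff.mp he')).neg_one_pow]
  have hkey : β^e * (1-β)^(n-e) = (-1)^((i:ℕ)+(j:ℕ)) / (1-2*α)^n * (α^e * (1-α)^(n-e)) := by
    have hsplit : (1-2*α)^n = (1-2*α)^e * (1-2*α)^(n-e) := by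
      rw [← pow_add]; congr 1; omega
    have hz : (1-2*α)^e ≠ 0 := pow_ne_zero _ hc
    have hz2 : (1-2*α)^(n-e) ≠ 0 := pow_ne_zero _ hc
    rw [h1b, hb, neg_pow, div_pow, div_pow, hpar, hsplit]
    field_simp
  calc ((i:ℕ).choose s : ℝ) * ((n - (i:ℕ)).choose ((j:ℕ) + s - (i:ℕ)) : ℝ) * β^e * (1-β)^(n-e)
      = ((i:ℕ).choose s : ℝ) * ((n - (i:ℕ)).choose ((j:ℕ) + s - (i:ℕ)) : ℝ) * (β^e * (1-β)^(n-e)) := by ring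
    _ = _ := by rw [hkey]; ring

theorem stmt_6 (n : ℕ) (α : ℝ) (hα : α ≠ 1/2) :
    IsUnit (Amat n α) ∧
      (Amat n α)⁻¹ = Matrix.of fun i j : Fin (n+1) =>
        (-1 : ℝ) ^ ((i : ℕ) + (j : ℕ)) / (1 - 2*α)^n * Amat n α i j := by
  have hc : (1:ℝ) - 2*α ≠ 0 := fun h => hα (by linarith)
  have hc' : (2*α-1 : ℝ) ≠ 0 := fun h => hα (by linarith)
  have hγ : α + α/(2*α-1) - 2*α*(α/(2*α-1)) = 0 := by
    rw [sub_eq_zero, mul_div_assoc', eq_div_iff hc', add_mul, div_mul_cancel₀ _ hc']; ring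
  have hAB : Amat n α * Amat n (α/(2*α-1)) = 1 := by
    rw [Amat_mul, hγ, Amat_zero]
  rw [← Amat_inv_entry n α hc]
  have hBA : Amat n (α/(2*α-1)) * Amat n α = 1 := mul_eq_one_comm.mp hAB
  exact ⟨⟨⟨Amat n α, Amat n (α/(2*α-1)), hAB, hBA⟩, rfl⟩, Matrix.inv_eq_right_inv hAB⟩
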